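/- Let X be a finite topological T₀-space. If X has no down beat points, then every semiflow φ : ℝ≥0 × X → X on X is trivial. -/

import Mathlib

open NNReal Filter Topology


open NNReal

/-- A semiflow on a topological space `X`: a jointly continuous map
`φ : ℝ≥0 × X → X` with `φ 0 x = x` and `φ s (φ t x) = φ (s + t) x`. -/
def IsSemiflow {X : Type*} [TopologicalSpace X] (φ : ℝ≥0 → X → X) : Prop :=
  Continuous (fun p : ℝ≥0 × X => φ p.1 p.2) ∧
  (∀ x : X, φ 0 x = x) ∧
  ∀ (s t : ℝ≥0) (x : X), φ s (φ t x) = φ (s + t) x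

/-- A semiflow is trivial if every time-`t` map is the identity. -/
def IsTrivialSemiflow {X : Type*} [TopologicalSpace X] (φ : ℝ≥0 → X → X) : Prop :=
  ∀ (t : ℝ≥0) (x : X), φ t x = x

/-- `x` is a down beat point: `U_x \ {x}` has a greatest element in the
specialization order (`y ⤳ x` means `y ≤ x`, i.e. `y ∈ U_x`). -/
def IsDownBeatPoint {X : Type*} [TopologicalSpace X] (x : X) : Prop :=
  ∃ m : X, (m ⤳ x ∧ m ≠ x) ∧ ∀ y : X, y ⤳ x → y ≠ x → y ⤳ m

/-- `x` is an up beat point: `F_x \ {x}` has a least element in the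
specialization order. -/
def IsUpBeatPoint {X : Type*} [TopologicalSpace X] (x : X) : Prop :=
  ∃ m : X, (x ⤳ m ∧ m ≠ x) ∧ ∀ y : X, x ⤳ y → y ≠ x → m ⤳ y

section SemiflowAux

variable {X : Type*} [TopologicalSpace X] [Finite X] [T0Space X]

private theorem key (hdown : ∀ x : X, ¬ IsDownBeatPoint x)
    (φ : ℝ≥0 → X → X) (hc : Continuous (fun p : ℝ≥0 × X => φ p.1 p.2))
    (h0 : ∀ x : X, φ 0 x = x)
    (hadd : ∀ (s t : ℝ≥0) (x : X), φ s (φ t x) = φ (s + t) x) :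
    ∀ (x : X) (t : ℝ≥0), φ t x = x := by
  -- continuity of each time-t map
  have hcont : ∀ t : ℝ≥0, Continuous (φ t) := fun t =>
    hc.comp (continuous_const.prodMk continuous_id)
  -- well-founded strict specialization relation
  set r : X → X → Prop := fun a b => a ⤳ b ∧ a ≠ b with hr
  haveI : IsTrans X r := ⟨fun a b c hab hbc => ⟨hab.1.trans hbc.1, by
    rintro rfl
    exact hab.2 ((hab.1.antisymm hbc.1).eq)⟩⟩
  haveI : IsIrrefl X r := ⟨fun a h => h.2 rfl⟩
  have wf : WellFounded r := Finite.wellFounded_of_trans_of_irrefl r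
  intro x
  induction x using wf.induction with
  | _ x IH =>
  -- Step A : small times specialize
  obtain ⟨ε, hε, hspec⟩ : ∃ ε : ℝ≥0, 0 < ε ∧ ∀ t < ε, φ t x ⤳ x := by
    have hcx : Continuous (fun t : ℝ≥0 => φ t x) :=
      hc.comp (continuous_id.prodMk continuous_const)
    have ht : Tendsto (fun t : ℝ≥0 => φ t x) (𝓝 0) (𝓝 x) := by
      have := hcx.continuousAt (x := (0 : ℝ≥0))
      rwa [ContinuousAt, h0] at this
    have hmem : nhdsKer {x} ∈ 𝓝 x :=
      isOpen_nhdsKer.mem_nhds (subset_nhdsKer rfl)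
    have hev : ∀ᶠ t in 𝓝 (0 : ℝ≥0), φ t x ∈ nhdsKer {x} := ht hmem
    rw [nhds_zero_basis.eventually_iff] at hev
    obtain ⟨ε, hε, hsub⟩ := hev
    exact ⟨ε, hε, fun t ht' => mem_nhdsKer_singleton.mp (hsub ht')⟩
  -- Step B : small times fix x
  have hsmall : ∀ t < ε, φ t x = x := by
    intro t ht
    by_contra hne
    exact hdown x ⟨φ t x, ⟨hspec t ht, hne⟩, fun y hy hy' => by
      have hyfix : φ t y = y := IH y ⟨hy, hy'⟩ t
      calc y = φ t y := hyfix.symm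
        _ ⤳ φ t x := hy.map (hcont t)⟩
  -- Step C : all times fix x
  set δ : ℝ≥0 := ε / 2 with hδ
  have hδpos : 0 < δ := by positivity
  have hδlt : δ < ε := NNReal.half_lt_self hε.ne'
  have hstep : ∀ n : ℕ, ∀ t : ℝ≥0, t ≤ n * δ → φ t x = x := by
    intro n
    induction n with
    | zero => intro t ht; simp only [Nat.cast_zero, zero_mul, le_zero_iff] at ht
              rw [ht]; exact h0 x
    | succ n IHn =>
      intro t ht
      by_cases h : t ≤ n * δ
      · exact IHn t h
      · push_neg at h
        have h1 : t - n * δ ≤ δ := by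
          rw [tsub_le_iff_left]
          rw [Nat.cast_succ, add_mul, one_mul] at ht
          exact ht
        have h2 : t = (t - n * δ) + n * δ := (tsub_add_cancel_of_le h.le).symm
        rw [h2, ← hadd]
        rw [IHn (n * δ) le_rfl]
        exact hsmall _ (lt_of_le_of_lt h1 hδlt)
  intro t
  obtain ⟨n, hn⟩ := exists_nat_ge (t / δ)
  exact hstep n t (by rwa [← div_le_iff₀ hδpos])

end SemiflowAux

/-- If a finite `T₀`-space has no down beat points, then every semiflow on it
is trivial. -/
theorem semiflow_trivial_of_no_downBeatPoint {X : Type*} [TopologicalSpace X] [Finite X]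
    [T0Space X] (hdown : ∀ x : X, ¬ IsDownBeatPoint x)
    (φ : ℝ≥0 → X → X) (hφ : IsSemiflow φ) : IsTrivialSemiflow φ := by
  intro t x
  exact key hdown φ hφ.1 hφ.2.1 hφ.2.2 x t
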